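/- Let δ ≥ 0 and x_m > 0. Define h(s) = (x_m² − s²)/2 + δ(x_m⁴ − s⁴)/4 for s ∈ [0, x_m]. Then (1/2)·(∫₀^{x_m} h(s)^{-1/2} ds)² ≥ (π²/4)·1/(1 + (3/4)δ x_m²). -/

import Mathlib

open MeasureTheory intervalIntegral Set

open Filter

section helpers
/-- Improper FTC on `[a,b)` with continuous extension. -/
lemma improper_ftc {f F : ℝ → ℝ} {a b : ℝ} (hab : a < b)
    (hint : IntervalIntegrable f volume a b)
    (hderiv : ∀ x ∈ Ico a b, HasDerivAt F (f x) x)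
    (hF : ContinuousOn F (Icc a b)) :
    ∫ x in a..b, f x = F b - F a := by
  set G : ℝ → ℝ := fun c => ∫ x in a..c, f x with hG
  have hGeq : ∀ c ∈ Ico a b, G c = F c - F a := by
    intro c hc
    refine intervalIntegral.integral_eq_sub_of_hasDerivAt (fun x hx => ?_) ?_
    · apply hderiv
      rw [uIcc_of_le hc.1] at hx
      exact ⟨hx.1, lt_of_le_of_lt hx.2 hc.2⟩
    · exact hint.mono_set (by rw [uIcc_of_le hc.1, uIcc_of_le hab.le]; exact Icc_subset_Icc le_rfl hc.2.le)
  have hGcont : ContinuousOn G (Icc a b) := by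
    have := intervalIntegral.continuousOn_primitive_interval'
      (μ := volume) (b₁ := a) (b₂ := b) (a := a) hint (by rw [uIcc_of_le hab.le]; exact ⟨le_rfl, hab.le⟩)
    rwa [uIcc_of_le hab.le] at this
  have hne : (nhdsWithin b (Ico a b)).NeBot := by
    refine mem_closure_iff_nhdsWithin_neBot.mp ?_
    rw [closure_Ico hab.ne]
    exact ⟨hab.le, le_rfl⟩
  have h1 : Tendsto G (nhdsWithin b (Ico a b)) (nhds (G b)) :=
    ((hGcont b ⟨hab.le, le_rfl⟩).mono Ico_subset_Icc_self)
  have h2 : Tendsto G (nhdsWithin b (Ico a b)) (nhds (F b - F a)) := by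
    have h3 : Tendsto (fun c => F c - F a) (nhdsWithin b (Ico a b)) (nhds (F b - F a)) :=
      (((hF b ⟨hab.le, le_rfl⟩).mono Ico_subset_Icc_self).sub tendsto_const_nhds)
    refine h3.congr' ?_
    filter_upwards [self_mem_nhdsWithin] with c hc
    exact (hGeq c hc).symm
  exact tendsto_nhds_unique h1 h2

/-- integrability from domination by `C * (x_m - s)^(-1/2)`. -/
lemma integrable_of_dom {x_m C : ℝ} (hxm : 0 < x_m) {f : ℝ → ℝ}
    (hm : AEStronglyMeasurable f (volume.restrict (uIoc (0:ℝ) x_m)))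
    (hb : ∀ s ∈ Ioc (0:ℝ) x_m, ‖f s‖ ≤ C * (x_m - s) ^ (-(1/2):ℝ)) :
    IntervalIntegrable f volume 0 x_m := by
  have hg : IntervalIntegrable (fun s => C * (x_m - s) ^ (-(1/2):ℝ)) volume 0 x_m := by
    have h1 : IntervalIntegrable (fun x : ℝ => x ^ (-(1/2):ℝ)) volume 0 x_m :=
      intervalIntegrable_rpow' (by norm_num)
    have h2 := (h1.comp_sub_left x_m)
    simp only [sub_self, sub_zero] at h2
    exact (h2.const_mul C).symm
  refine hg.mono_fun hm ?_
  rw [Filter.EventuallyLE, ae_restrict_iff' measurableSet_uIoc]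
  refine Eventually.of_forall (fun s hs => ?_)
  rw [uIoc_of_le hxm.le] at hs
  have h3 := hb s hs
  calc ‖f s‖ ≤ C * (x_m - s) ^ (-(1/2):ℝ) := h3
  _ ≤ ‖C * (x_m - s) ^ (-(1/2):ℝ)‖ := le_abs_self _

variable {x_m : ℝ}

lemma hasDerivAt_arcsin_div (hxm : 0 < x_m) {s : ℝ} (hs : s ∈ Ico (0:ℝ) x_m) :
    HasDerivAt (fun u => Real.arcsin (u / x_m)) ((x_m^2 - s^2) ^ (-(1/2):ℝ)) s := by
  have hlt : s / x_m < 1 := (div_lt_one hxm).mpr hs.2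
  have hge : 0 ≤ s / x_m := div_nonneg hs.1 hxm.le
  have h1 : HasDerivAt Real.arcsin (1 / Real.sqrt (1 - (s/x_m)^2)) (s / x_m) :=
    Real.hasDerivAt_arcsin (by linarith) (by linarith)
  have h2 : HasDerivAt (fun u : ℝ => u / x_m) (1 / x_m) s := by
    simpa using (hasDerivAt_id s).div_const x_m
  have h3 := h1.comp s h2
  have ht : 0 < x_m^2 - s^2 := by nlinarith [hs.1, hs.2]
  have hsq : Real.sqrt (1 - (s / x_m)^2) = Real.sqrt (x_m^2 - s^2) / x_m := by
    have h4 : 1 - (s / x_m)^2 = (x_m^2 - s^2) / x_m^2 := by field_simp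
    rw [h4, Real.sqrt_div ht.le, Real.sqrt_sq hxm.le]
  have h5 : (x_m^2 - s^2) ^ (-(1/2):ℝ) = (Real.sqrt (x_m^2 - s^2))⁻¹ := by
    rw [Real.rpow_neg ht.le, ← Real.sqrt_eq_rpow]
  have hsp : 0 < Real.sqrt (x_m^2 - s^2) := Real.sqrt_pos.2 ht
  have h6 : (1 / Real.sqrt (1 - (s/x_m)^2)) * (1/x_m) = (x_m^2-s^2) ^ (-(1/2):ℝ) := by
    rw [hsq, h5]; field_simp
  rw [h6] at h3
  exact h3

lemma f1_bound (hxm : 0 < x_m) {s : ℝ} (hs : s ∈ Ioc (0:ℝ) x_m) :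
    (x_m^2 - s^2) ^ (-(1/2):ℝ) ≤ x_m ^ (-(1/2):ℝ) * (x_m - s) ^ (-(1/2):ℝ) := by
  rw [← Real.mul_rpow hxm.le (by linarith [hs.2] : (0:ℝ) ≤ x_m - s)]
  rcases eq_or_lt_of_le hs.2 with h | h
  · rw [← h]; simp [Real.zero_rpow (by norm_num : -(1/2:ℝ) ≠ 0)]
  · exact Real.rpow_le_rpow_of_nonpos (by nlinarith [hs.1]) (by nlinarith [hs.1.le]) (by norm_num)

lemma meas_f1 : AEStronglyMeasurable (fun s => (x_m^2 - s^2) ^ (-(1/2):ℝ))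
    (volume.restrict (uIoc (0:ℝ) x_m)) := by
  apply Measurable.aestronglyMeasurable
  fun_prop

lemma integrable_f1 (hxm : 0 < x_m) :
    IntervalIntegrable (fun s => (x_m^2 - s^2) ^ (-(1/2):ℝ)) volume 0 x_m := by
  refine integrable_of_dom hxm (C := x_m ^ (-(1/2):ℝ)) meas_f1 (fun s hs => ?_)
  have ht0 : (0:ℝ) ≤ x_m^2 - s^2 := by nlinarith [hs.1.le, hs.2]
  rw [Real.norm_of_nonneg (Real.rpow_nonneg ht0 _)]
  exact f1_bound hxm hs

lemma integrable_f2 (hxm : 0 < x_m) :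
    IntervalIntegrable (fun s => s^2 * (x_m^2 - s^2) ^ (-(1/2):ℝ)) volume 0 x_m := by
  refine integrable_of_dom hxm (C := x_m^2 * x_m ^ (-(1/2):ℝ))
    ((measurable_id.pow_const 2).aestronglyMeasurable.mul meas_f1) (fun s hs => ?_)
  have ht0 : (0:ℝ) ≤ x_m^2 - s^2 := by nlinarith [hs.1.le, hs.2]
  have h1 : (0:ℝ) ≤ (x_m^2 - s^2) ^ (-(1/2):ℝ) := Real.rpow_nonneg ht0 _
  rw [Real.norm_of_nonneg (by positivity)]
  have h2 : s^2 * (x_m^2 - s^2) ^ (-(1/2):ℝ) ≤ x_m^2 * (x_m^2 - s^2) ^ (-(1/2):ℝ) := by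
    apply mul_le_mul_of_nonneg_right _ h1
    nlinarith [hs.1.le, hs.2]
  calc s^2 * (x_m^2 - s^2) ^ (-(1/2):ℝ) ≤ x_m^2 * (x_m^2 - s^2) ^ (-(1/2):ℝ) := h2
    _ ≤ x_m^2 * (x_m ^ (-(1/2):ℝ) * (x_m - s) ^ (-(1/2):ℝ)) :=
        mul_le_mul_of_nonneg_left (f1_bound hxm hs) (by positivity)
    _ = x_m^2 * x_m ^ (-(1/2):ℝ) * (x_m - s) ^ (-(1/2):ℝ) := by ring

lemma integral_A (hxm : 0 < x_m) :
    ∫ s in (0:ℝ)..x_m, (x_m^2 - s^2) ^ (-(1/2):ℝ) = Real.pi / 2 := by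
  rw [improper_ftc hxm (integrable_f1 hxm) (fun x hx => hasDerivAt_arcsin_div hxm hx)
    ((Real.continuous_arcsin.comp (continuous_id.div_const x_m)).continuousOn)]
  rw [div_self hxm.ne', zero_div, Real.arcsin_one, Real.arcsin_zero, sub_zero]

lemma hasDerivAt_F2 (hxm : 0 < x_m) {s : ℝ} (hs : s ∈ Ico (0:ℝ) x_m) :
    HasDerivAt (fun u => x_m^2/2 * Real.arcsin (u/x_m) - u/2 * Real.sqrt (x_m^2 - u^2))
      (s^2 * (x_m^2 - s^2) ^ (-(1/2):ℝ)) s := by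
  have ht : 0 < x_m^2 - s^2 := by nlinarith [hs.1, hs.2]
  have hsp : 0 < Real.sqrt (x_m^2 - s^2) := Real.sqrt_pos.2 ht
  have d1 := (hasDerivAt_arcsin_div hxm hs).const_mul (x_m^2/2)
  have hin : HasDerivAt (fun u : ℝ => x_m^2 - u^2) (-(2*s^1)) s := by
    simpa using (hasDerivAt_pow 2 s).const_sub (x_m^2)
  have hcomp := (Real.hasDerivAt_sqrt ht.ne').comp s hin
  have d2 := ((hasDerivAt_id s).div_const 2).mul hcomp
  have := d1.sub d2
  have hval : x_m^2/2 * (x_m^2 - s^2) ^ (-(1/2):ℝ) -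
      (1/2 * Real.sqrt (x_m^2 - s^2) + s/2 * (1 / (2 * Real.sqrt (x_m^2 - s^2)) * -(2*s^1)))
      = s^2 * (x_m^2 - s^2) ^ (-(1/2):ℝ) := by
    rw [Real.rpow_neg ht.le, ← Real.sqrt_eq_rpow]
    have hsq : Real.sqrt (x_m^2 - s^2) ^ 2 = x_m^2 - s^2 := Real.sq_sqrt ht.le
    field_simp
    nlinarith [hsq]
  simp only [Function.comp_def, id_eq] at this
  rw [hval] at this
  exact this

lemma integral_B (hxm : 0 < x_m) :
    ∫ s in (0:ℝ)..x_m, s^2 * (x_m^2 - s^2) ^ (-(1/2):ℝ) = Real.pi * x_m^2 / 4 := by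
  rw [improper_ftc hxm (integrable_f2 hxm) (fun x hx => hasDerivAt_F2 hxm hx) ?_]
  · rw [div_self hxm.ne', zero_div, Real.arcsin_one, Real.arcsin_zero, sub_self,
      Real.sqrt_zero]
    ring
  · apply Continuous.continuousOn
    have h1 : Continuous fun u : ℝ => x_m^2/2 * Real.arcsin (u / x_m) :=
      continuous_const.mul (Real.continuous_arcsin.comp (continuous_id.div_const x_m))
    have h2 : Continuous fun u : ℝ => u/2 * Real.sqrt (x_m^2 - u^2) :=
      (continuous_id.div_const 2).mul
        (Real.continuous_sqrt.comp (continuous_const.sub (continuous_pow 2)))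
    exact h1.sub h2

lemma tangent {W K : ℝ} (hW : 0 < W) (hK : 0 < K) :
    (K * Real.sqrt K)⁻¹ * (K - (W - K)/2) ≤ (Real.sqrt W)⁻¹ := by
  have ha : 0 < Real.sqrt W := Real.sqrt_pos.2 hW
  have hb : 0 < Real.sqrt K := Real.sqrt_pos.2 hK
  have ha2 : Real.sqrt W ^ 2 = W := Real.sq_sqrt hW.le
  have hb2 : Real.sqrt K ^ 2 = K := Real.sq_sqrt hK.le
  set a := Real.sqrt W
  set b := Real.sqrt K
  rw [← ha2, ← hb2]
  have h1 : (b^2 * b)⁻¹ * (b^2 - (a^2 - b^2)/2) = (b^2 - (a^2 - b^2)/2) / (b^2 * b) := by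
    ring
  have h2 : (a:ℝ)⁻¹ = 1 / a := (one_div a).symm
  rw [h1, h2, div_le_div_iff₀ (by positivity) ha]
  nlinarith [mul_nonneg (sq_nonneg (a - b)) (by positivity : (0:ℝ) ≤ a + 2*b)]

lemma half_rpow {t : ℝ} (ht : 0 ≤ t) :
    (t/2) ^ (-(1/2):ℝ) = Real.sqrt 2 * t ^ (-(1/2):ℝ) := by
  rw [Real.div_rpow ht (by norm_num), Real.rpow_neg (by norm_num : (0:ℝ) ≤ 2),
    ← Real.sqrt_eq_rpow, div_eq_mul_inv, inv_inv, mul_comm]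

lemma hkey_gen {K : ℝ} (hK : 0 < K) :
    (1/2) * ((Real.sqrt 2 * (K * Real.sqrt K)⁻¹) * (K * (Real.pi/2)))^2
      = Real.pi^2/4 * (1/K) := by
  have hsK : 0 < Real.sqrt K := Real.sqrt_pos.2 hK
  have hsK2 : Real.sqrt K ^ 2 = K := Real.sq_sqrt hK.le
  have h2 : Real.sqrt 2 ^ 2 = 2 := Real.sq_sqrt (by norm_num)
  have e3 : (1/2) * ((Real.sqrt 2 * (K * Real.sqrt K)⁻¹) * (K * (Real.pi/2)))^2
      = (1/2) * ((Real.sqrt 2)^2 * ((K * Real.sqrt K)^2)⁻¹ * (K*(Real.pi/2))^2) := by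
    ring
  rw [e3, h2, mul_pow, hsK2]
  field_simp
  ring

end helpers


/-- The lower bound (3.4) on the principal eigenvalue of the Duffing
oscillator: `λ = (1/2)(∫₀^{x_m} h^{-1/2})² ≥ (π²/4)/(1 + 3δx_m²/4)`,
where `h(s) = (x_m² − s²)/2 + δ(x_m⁴ − s⁴)/4`. -/
theorem stmt_13 (δ x_m : ℝ) (hδ : 0 ≤ δ) (hxm : 0 < x_m)
    (h : ℝ → ℝ)
    (hh : ∀ s, h s = (x_m ^ 2 - s ^ 2) / 2 + δ * (x_m ^ 4 - s ^ 4) / 4) :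
    (1/2) * (∫ s in (0:ℝ)..x_m, (h s) ^ (-(1/2) : ℝ)) ^ 2
      ≥ (Real.pi ^ 2 / 4) * (1 / (1 + 3 * δ * x_m ^ 2 / 4)) := by
  have hK : (0:ℝ) < 1 + 3 * δ * x_m ^ 2 / 4 := by positivity
  set K : ℝ := 1 + 3 * δ * x_m ^ 2 / 4 with hKdef
  have hsK : 0 < Real.sqrt K := Real.sqrt_pos.2 hK
  have hsK2 : Real.sqrt K ^ 2 = K := Real.sq_sqrt hK.le
  set c1 : ℝ := Real.sqrt 2 * (K * Real.sqrt K)⁻¹ with hc1def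
  have hc1 : 0 ≤ c1 := by positivity
  set L : ℝ → ℝ := fun s => c1 * ((K + δ * x_m^2/8) * (x_m^2 - s^2) ^ (-(1/2):ℝ)
    - (δ/4) * (s^2 * (x_m^2 - s^2) ^ (-(1/2):ℝ))) with hLdef
  have hLint : IntervalIntegrable L volume 0 x_m :=
    (((integrable_f1 hxm).const_mul _).sub ((integrable_f2 hxm).const_mul (δ/4))).const_mul c1
  have hLval : ∫ s in (0:ℝ)..x_m, L s = c1 * (K * (Real.pi/2)) := by
    rw [hLdef]
    rw [intervalIntegral.integral_const_mul, intervalIntegral.integral_sub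
      ((integrable_f1 hxm).const_mul _) ((integrable_f2 hxm).const_mul (δ/4)),
      intervalIntegral.integral_const_mul, intervalIntegral.integral_const_mul,
      integral_A hxm, integral_B hxm]
    ring
  -- integrability of h^(-1/2)
  have hfun : h = fun s => (x_m ^ 2 - s ^ 2) / 2 + δ * (x_m ^ 4 - s ^ 4) / 4 := funext hh
  have hint_h : IntervalIntegrable (fun s => h s ^ (-(1/2):ℝ)) volume 0 x_m := by
    refine integrable_of_dom hxm (C := Real.sqrt 2 * x_m ^ (-(1/2):ℝ)) ?_ ?_
    · apply Measurable.aestronglyMeasurable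
      rw [hfun]; fun_prop
    · intro s hs
      have hs2 : s^2 ≤ x_m^2 := by nlinarith [hs.1.le, hs.2]
      have hs4 : s^4 ≤ x_m^4 := by nlinarith [sq_nonneg s, sq_nonneg x_m, hs2]
      have hdel : 0 ≤ δ * (x_m^4 - s^4) := mul_nonneg hδ (by linarith)
      have hnn : 0 ≤ h s := by rw [hh]; linarith
      rw [Real.norm_of_nonneg (Real.rpow_nonneg hnn _)]
      rcases eq_or_lt_of_le hs.2 with he | hlt
      · have : h s = 0 := by rw [hh, ← he]; ring
        rw [this, Real.zero_rpow (by norm_num : -(1/2:ℝ) ≠ 0)]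
        have h9 : (0:ℝ) ≤ x_m - s := by rw [he, sub_self]
        exact mul_nonneg (by positivity) (Real.rpow_nonneg h9 _)
      · have hge : (x_m - s) * x_m / 2 ≤ h s := by
          rw [hh]; nlinarith [hdel, mul_nonneg hs.1.le (by linarith : (0:ℝ) ≤ x_m - s)]
        have hxs : 0 < x_m - s := by linarith
        have hpos : 0 < (x_m - s) * x_m / 2 := by positivity
        calc h s ^ (-(1/2):ℝ) ≤ ((x_m - s) * x_m / 2) ^ (-(1/2):ℝ) :=
              Real.rpow_le_rpow_of_nonpos hpos hge (by norm_num)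
          _ = Real.sqrt 2 * ((x_m - s) * x_m) ^ (-(1/2):ℝ) := half_rpow (by nlinarith [hlt])
          _ = Real.sqrt 2 * x_m ^ (-(1/2):ℝ) * (x_m - s) ^ (-(1/2):ℝ) := by
              rw [Real.mul_rpow (by linarith [hlt] : (0:ℝ) ≤ x_m - s) hxm.le]; ring
  -- pointwise bound
  have hmono : ∀ s ∈ Icc (0:ℝ) x_m, L s ≤ h s ^ (-(1/2):ℝ) := by
    intro s hs
    rcases eq_or_lt_of_le hs.2 with he | hlt
    · have h0 : h s = 0 := by rw [hh, ← he]; ring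
      have hf0 : (x_m^2 - s^2) ^ (-(1/2):ℝ) = 0 := by
        rw [← he, sub_self, Real.zero_rpow (by norm_num : -(1/2:ℝ) ≠ 0)]
      have hL0 : L s = 0 := by simp only [hLdef]; rw [hf0]; ring
      rw [hL0, h0, Real.zero_rpow (by norm_num : -(1/2:ℝ) ≠ 0)]
    · have ht : 0 < x_m^2 - s^2 := by nlinarith [hs.1, hlt]
      set W : ℝ := 1 + δ * (x_m^2 + s^2) / 2 with hWdef
      have hW : 0 < W := by positivity
      have hhs : h s = (x_m^2 - s^2)/2 * W := by rw [hh, hWdef]; ring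
      have hsplit : h s ^ (-(1/2):ℝ)
          = Real.sqrt 2 * (x_m^2 - s^2) ^ (-(1/2):ℝ) * (Real.sqrt W)⁻¹ := by
        rw [hhs, Real.mul_rpow (by positivity) hW.le, half_rpow ht.le,
          Real.rpow_neg hW.le, ← Real.sqrt_eq_rpow]
      have htan := tangent hW hK
      have hmul := mul_le_mul_of_nonneg_left htan
        (by positivity : (0:ℝ) ≤ Real.sqrt 2 * (x_m^2 - s^2) ^ (-(1/2):ℝ))
      rw [hsplit]
      refine le_trans (le_of_eq ?_) hmul
      have hWK : K - (W - K)/2 = (K + δ * x_m^2/8) - (δ/4) * s^2 := by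
        rw [hWdef, hKdef]; ring
      rw [hLdef, hc1def, hWK]; ring
  have hIL := intervalIntegral.integral_mono_on hxm.le hLint hint_h hmono
  rw [hLval] at hIL
  have hJ0 : (0:ℝ) ≤ c1 * (K * (Real.pi/2)) := by positivity
  have hsq : (c1 * (K * (Real.pi/2)))^2 ≤ (∫ s in (0:ℝ)..x_m, h s ^ (-(1/2):ℝ))^2 :=
    pow_le_pow_left₀ hJ0 hIL 2
  have h2 : Real.sqrt 2 ^ 2 = 2 := Real.sq_sqrt (by norm_num)
  have hkey : (1/2) * (c1 * (K * (Real.pi/2)))^2 = Real.pi^2/4 * (1/K) := by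
    rw [hc1def]; exact hkey_gen hK
  calc (Real.pi^2/4) * (1/K) = (1/2) * (c1 * (K * (Real.pi/2)))^2 := hkey.symm
    _ ≤ (1/2) * (∫ s in (0:ℝ)..x_m, h s ^ (-(1/2):ℝ))^2 := by linarith [hsq]
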